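/- Let G be a tree (a finite connected simple graph with no cycles) and let f : ℝ → ℝ satisfy |f(x)| ≤ |x| for all x ∈ ℝ. Then for every symmetric positive definite matrix A with zeros according to G, the matrix f*[A] obtained by applying f to every off-diagonal entry of A (leaving the diagonal unchanged) is positive definite. -/

import Mathlib

/-- `f*[A]`: apply `f` to off-diagonal entries, leave diagonal unchanged. -/
def offDiagApply {n : ℕ} (f : ℝ → ℝ) (A : Matrix (Fin n) (Fin n) ℝ) :
    Matrix (Fin n) (Fin n) ℝ :=
  Matrix.of fun i j => if i = j then A i i else f (A i j)

private lemma list_prod_sq_one : ∀ (l : List ℝ), (∀ x ∈ l, x * x = 1) → l.prod * l.prod = 1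
  | [], _ => by simp
  | (a :: l), h => by
      have h1 : a * a = 1 := h a List.mem_cons_self
      have h2 := list_prod_sq_one l (fun x hx => h x (List.mem_cons_of_mem a hx))
      simp only [List.prod_cons]
      calc a * l.prod * (a * l.prod) = (a * a) * (l.prod * l.prod) := by ring
        _ = 1 := by rw [h1, h2]; ring

/-- On a tree, one can choose signs `ε i ∈ {±1}` such that
`ε i * ε j * A i j = -|A i j|` for all `i ≠ j`. -/
private lemma exists_signs (n : ℕ) (G : SimpleGraph (Fin n)) (hG : G.IsTree)
    (A : Matrix (Fin n) (Fin n) ℝ) (hAs : A.IsSymm)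
    (hAG : ∀ i j, i ≠ j → ¬ G.Adj i j → A i j = 0) :
    ∃ ε : Fin n → ℝ, (∀ i, ε i * ε i = 1) ∧
      ∀ i j, i ≠ j → ε i * ε j * A i j = -|A i j| := by
  classical
  obtain ⟨hne, huniq⟩ := SimpleGraph.isTree_iff_existsUnique_path.mp hG
  obtain ⟨r⟩ := hne
  choose p hp hup using huniq r
  set g : G.Dart → ℝ := fun d => if 0 < A d.fst d.snd then -1 else 1 with hgdef
  have hg1 : ∀ d : G.Dart, g d * g d = 1 := by
    intro d; simp only [hgdef]; split <;> norm_num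
  set ε : Fin n → ℝ := fun i => ((p i).darts.map g).prod with hεdef
  have hε1 : ∀ i, ε i * ε i = 1 := by
    intro i
    apply list_prod_sq_one
    intro x hx
    obtain ⟨d, _, rfl⟩ := List.mem_map.mp hx
    exact hg1 d
  -- If j is not on the path to i, then path to j = path to i plus the edge.
  have key : ∀ i j (h : G.Adj i j), j ∉ (p i).support →
      ε j = ε i * g ⟨(i, j), h⟩ := by
    intro i j h hj
    have hcp : ((p i).concat h).IsPath := by
      rw [SimpleGraph.Walk.isPath_def, SimpleGraph.Walk.support_concat,
        List.nodup_append]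
      refine ⟨(hp i).2, List.nodup_singleton j, ?_⟩
      intro a ha b hb hab
      rw [List.mem_singleton] at hb
      exact hj (by rw [← hb, ← hab]; exact ha)
    have := hup j _ hcp
    have hdarts : (p j).darts = (p i).darts ++ [⟨(i, j), h⟩] := by
      rw [← this, SimpleGraph.Walk.darts_concat, List.concat_eq_append]
    rw [hεdef]
    simp only [hdarts, List.map_append, List.prod_append, List.map_cons, List.map_nil,
      List.prod_cons, List.prod_nil, mul_one]
  -- In a tree, for an edge i~j, not both "j on path to i" and "i on path to j".
  have notboth : ∀ i j (h : G.Adj i j), j ∈ (p i).support → i ∉ (p j).support := by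
    intro i j h hj hi
    have hij : i ≠ j := h.ne
    -- takeUntil of p i at j equals p j
    have ht : ((p i).takeUntil j hj).IsPath := (hp i).takeUntil hj
    have heq : (p i).takeUntil j hj = p j := hup j _ ht
    -- i occurs in the tail of dropUntil, contradicting nodup
    have hspec := SimpleGraph.Walk.take_spec (p i) hj
    have hnodup : (p i).support.Nodup := (hp i).2
    rw [← hspec, SimpleGraph.Walk.support_append, List.nodup_append] at hnodup
    obtain ⟨-, -, hdisj⟩ := hnodup
    have hiend : i ∈ ((p i).dropUntil j hj).support :=
      SimpleGraph.Walk.end_mem_support _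
    have hitail : i ∈ ((p i).dropUntil j hj).support.tail := by
      rw [SimpleGraph.Walk.support_eq_cons] at hiend
      rcases List.mem_cons.mp hiend with h1 | h1
      · exact absurd h1.symm hij.symm
      · exact h1
    have hitake : i ∈ ((p i).takeUntil j hj).support := by
      rw [heq]; exact hi
    exact hdisj i hitake i hitail rfl
  have hedge : ∀ i j (h : G.Adj i j), ε i * ε j = (if 0 < A i j then (-1 : ℝ) else 1) := by
    intro i j h
    by_cases hj : j ∈ (p i).support
    · have hi : i ∉ (p j).support := notboth i j h hj
      have := key j i h.symm hi
      rw [this]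
      have : g ⟨(j, i), h.symm⟩ = (if 0 < A i j then (-1 : ℝ) else 1) := by
        simp only [hgdef]
        have : A j i = A i j := by
          have := hAs; rw [Matrix.IsSymm] at this
          have := congrFun (congrFun this i) j
          simpa [Matrix.transpose_apply] using this
        rw [this]
      rw [this]
      have := hε1 j
      calc (ε j * (if 0 < A i j then (-1:ℝ) else 1)) * ε j
          = (ε j * ε j) * (if 0 < A i j then (-1:ℝ) else 1) := by ring
        _ = (if 0 < A i j then (-1:ℝ) else 1) := by rw [hε1 j]; ring
    · have := key i j h hj
      rw [this]
      have hgval : g ⟨(i, j), h⟩ = (if 0 < A i j then (-1 : ℝ) else 1) := rfl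
      calc ε i * (ε i * g ⟨(i, j), h⟩) = (ε i * ε i) * g ⟨(i, j), h⟩ := by ring
        _ = (if 0 < A i j then (-1:ℝ) else 1) := by rw [hε1 i, hgval]; ring
  refine ⟨ε, hε1, ?_⟩
  intro i j hij
  by_cases hadj : G.Adj i j
  · rw [hedge i j hadj]
    by_cases hpos : 0 < A i j
    · simp [hpos, abs_of_pos hpos]
    · push_neg at hpos
      simp [not_lt.mpr hpos, abs_of_nonpos hpos]
  · rw [hAG i j hij hadj]
    simp

theorem stmt_4 (n : ℕ) (G : SimpleGraph (Fin n)) (hG : G.IsTree)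
    (f : ℝ → ℝ) (hf : ∀ x : ℝ, |f x| ≤ |x|)
    (A : Matrix (Fin n) (Fin n) ℝ) (hAs : A.IsSymm) (hA : A.PosDef)
    (hAG : ∀ i j, i ≠ j → ¬ G.Adj i j → A i j = 0) :
    (offDiagApply f A).PosDef := by
  classical
  obtain ⟨ε, hε1, hεA⟩ := exists_signs n G hG A hAs hAG
  have hεne : ∀ i, ε i ≠ 0 := by
    intro i h
    have := hε1 i
    rw [h, mul_zero] at this
    norm_num at this
  rw [Matrix.posDef_iff_dotProduct_mulVec]
  constructor
  · -- Hermitian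
    ext i j
    simp only [Matrix.IsHermitian, Matrix.conjTranspose_apply, offDiagApply, Matrix.of_apply,
      star_trivial]
    have hAsym : A j i = A i j := by
      have := congrFun (congrFun hAs i) j
      simpa [Matrix.transpose_apply] using this
    by_cases h : i = j
    · subst h; simp
    · simp [h, Ne.symm h, hAsym]
  · intro x hx
    set z : Fin n → ℝ := fun i => ε i * |x i| with hzdef
    have hz : z ≠ 0 := by
      intro h
      apply hx
      funext i
      have : z i = 0 := congrFun h i
      rw [hzdef] at this
      simp only at this
      rcases mul_eq_zero.mp this with h1 | h1
      · exact absurd h1 (hεne i)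
      · exact abs_eq_zero.mp h1
    have hApos := hA.dotProduct_mulVec_pos hz
    have hle : dotProduct (star z) (A.mulVec z) ≤
        dotProduct (star x) ((offDiagApply f A).mulVec x) := by
      simp only [star_trivial, dotProduct, Matrix.mulVec, Finset.mul_sum]
      apply Finset.sum_le_sum
      intro i _
      apply Finset.sum_le_sum
      intro j _
      by_cases h : i = j
      · subst h
        simp only [offDiagApply, Matrix.of_apply, eq_self_iff_true, if_true, hzdef]
        have h1 := hε1 i
        apply le_of_eq
        calc ε i * |x i| * (A i i * (ε i * |x i|))
            = (ε i * ε i) * (A i i * (|x i| * |x i|)) := by ring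
          _ = A i i * (x i * x i) := by rw [h1, abs_mul_abs_self]; ring
          _ = x i * (A i i * x i) := by ring
      · simp only [offDiagApply, Matrix.of_apply, if_neg h, hzdef]
        have h1 : ε i * |x i| * (A i j * (ε j * |x j|))
            = (ε i * ε j * A i j) * (|x i| * |x j|) := by ring
        rw [h1, hεA i j h]
        have h2 : -(|f (A i j)| * |x i * x j|) ≤ f (A i j) * (x i * x j) := by
          rw [← abs_mul]
          exact neg_abs_le _
        have h3 : -|A i j| * (|x i| * |x j|) ≤ -(|f (A i j)| * |x i * x j|) := by
          rw [abs_mul, neg_mul, neg_le_neg_iff]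
          apply mul_le_mul_of_nonneg_right (hf _)
          positivity
        calc -|A i j| * (|x i| * |x j|) ≤ f (A i j) * (x i * x j) := le_trans h3 h2
          _ = x i * (f (A i j) * x j) := by ring
    exact lt_of_lt_of_le hApos hle
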